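/- For A = {0,1} and any n ≥ 2, there exists a linear universal partial word for A^n with exactly one ◊, located at the first position, which begins with ◊ 0^{n-1} 1. -/

import Mathlib

/-- A partial-word symbol over the alphabet `Fin α`: `none` is the wildcard `◊`. -/
abbrev PSym (α : ℕ) := Option (Fin α)

/-- The word `v ∈ A^*` appears as a factor of the partial word `u` at 0-based position `i`:
each symbol of `u` in the window is either `◊` or equals the corresponding letter of `v`. -/
def MatchAt {α : ℕ} (u : List (PSym α)) (v : List (Fin α)) (i : ℕ) : Prop :=
  i + v.length ≤ u.length ∧
    ∀ j < v.length, u[i + j]? = some none ∨ u[i + j]? = (v[j]?).map some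

/-- `u` is a linear universal partial word (upword) for `A^n`, `A = Fin α`:
every word of length `n` over `A` appears exactly once as a factor. -/
def IsLinearUpword (α n : ℕ) (u : List (PSym α)) : Prop :=
  ∀ v : List (Fin α), v.length = n → ∃! i : ℕ, MatchAt u v i

/-- `v` appears as a cyclic factor of the partial word `u` at position `i`
(indices taken modulo `u.length`). -/
def CycMatchAt {α : ℕ} (u : List (PSym α)) (v : List (Fin α)) (i : ℕ) : Prop :=
  ∀ j < v.length,
    u[(i + j) % u.length]? = some none ∨ u[(i + j) % u.length]? = (v[j]?).map some

/-- `u` is a cyclic universal partial word for `A^n`: every word of length `n` over `A`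
appears exactly once as a cyclic factor. -/
def IsCyclicUpword (α n : ℕ) (u : List (PSym α)) : Prop :=
  ∀ v : List (Fin α), v.length = n → ∃! i : ℕ, i < u.length ∧ CycMatchAt u v i

namespace UpwordAux

/-- window of length `n` at position `k` of the bi-infinite word `f`. -/
def wnd (f : ℕ → Fin 2) (n k : ℕ) : Fin n → Fin 2 := fun j => f (k + j)

/-- cyclic de Bruijn sequence of order `n`, presented as a periodic function. -/
def IsDB (n : ℕ) (f : ℕ → Fin 2) : Prop :=
  (∀ k, f (k + 2^n) = f k) ∧ Function.Bijective (fun k : Fin (2^n) => wnd f n k)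

lemma fin2_cases (x : Fin 2) : x = 0 ∨ x = 1 := by revert x; decide
lemma fin2_add_self (x : Fin 2) : x + x = 0 := by revert x; decide
lemma fin2_ne_add_one (x : Fin 2) : x ≠ x + 1 := by revert x; decide
lemma fin2_cancel {a b c : Fin 2} (h : a + b = a + c) : b = c := by revert a b c; decide
lemma fin2_solve {a b c : Fin 2} (h : a + b = c) : b = c + a := by revert a b c; decide

section periodic
variable {f : ℕ → Fin 2} {N : ℕ}

lemma per_mul (h : ∀ k, f (k + N) = f k) : ∀ t k, f (k + N * t) = f k := by
  intro t
  induction t with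
  | zero => simp
  | succ t ih =>
    intro k
    have : k + N * (t+1) = (k + N * t) + N := by ring
    rw [this, h, ih]

lemma per_mod (hN : 0 < N) (h : ∀ k, f (k + N) = f k) (m : ℕ) : f m = f (m % N) := by
  conv_lhs => rw [← Nat.mod_add_div m N]
  exact per_mul h _ _

lemma per_congr (hN : 0 < N) (h : ∀ k, f (k + N) = f k) {a b : ℕ} (hab : a % N = b % N) :
    f a = f b := by
  rw [per_mod hN h a, per_mod hN h b, hab]

end periodic

lemma mod_eq_cases {N a b : ℕ} (hN : 0 < N) (ha : a < 2*N) (hb : b < 2*N) (h : a % N = b % N) :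
    a = b ∨ a = b + N ∨ b = a + N := by
  have h1 := Nat.div_add_mod a N
  have h2 := Nat.div_add_mod b N
  have ha' : a / N < 2 := (Nat.div_lt_iff_lt_mul hN).2 (by omega)
  have hb' : b / N < 2 := (Nat.div_lt_iff_lt_mul hN).2 (by omega)
  interval_cases h3 : a / N <;> interval_cases h4 : b / N <;> omega

section db
variable {n : ℕ} {f : ℕ → Fin 2}

lemma IsDB.per_pos (hf : IsDB n f) : (0:ℕ) < 2^n := pow_pos (by norm_num) n

lemma db_inj (hf : IsDB n f) {a b : ℕ} (h : ∀ j < n, f (a + j) = f (b + j)) :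
    a % 2^n = b % 2^n := by
  have hN : (0:ℕ) < 2^n := pow_pos (by norm_num) n
  have key : wnd f n (a % 2^n) = wnd f n (b % 2^n) := by
    funext j
    have h1 : f (a % 2^n + j) = f (a + j) :=
      per_congr hN hf.1 (Nat.mod_add_mod a (2^n) j)
    have h2 : f (b % 2^n + j) = f (b + j) :=
      per_congr hN hf.1 (Nat.mod_add_mod b (2^n) j)
    simp only [wnd, h1, h2]
    exact h j j.isLt
  have := hf.2.1 (a₁ := ⟨a % 2^n, Nat.mod_lt _ hN⟩) (a₂ := ⟨b % 2^n, Nat.mod_lt _ hN⟩) key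
  exact congrArg Fin.val this

lemma db_surj (hf : IsDB n f) (w : Fin n → Fin 2) :
    ∃ k, k < 2^n ∧ wnd f n k = w := by
  obtain ⟨k, hk⟩ := hf.2.2 w
  exact ⟨k, k.isLt, hk⟩

end db

/-! ### prefix sums -/

def ps (f : ℕ → Fin 2) (k : ℕ) : Fin 2 := ∑ i ∈ Finset.range k, f i

lemma ps_succ (f : ℕ → Fin 2) (k : ℕ) : ps f (k+1) = ps f k + f k :=
  Finset.sum_range_succ f k

lemma ps_add_per {f : ℕ → Fin 2} {N : ℕ} (h : ∀ k, f (k + N) = f k) :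
    ∀ k, ps f (k + N) = ps f k + ps f N := by
  intro k
  induction k with
  | zero => simp [ps]
  | succ k ih =>
    have e : k + 1 + N = (k + N) + 1 := by omega
    rw [e, ps_succ, ih, h, ps_succ]
    exact add_right_comm _ _ _

/-- the letter is recovered from consecutive prefix sums. -/
lemma fin2_recover (a b : Fin 2) : b = (a + b) + a := by revert a b; decide

lemma ps_letter (f : ℕ → Fin 2) (m : ℕ) : f m = ps f (m+1) + ps f m := by
  rw [ps_succ]
  exact fin2_recover (ps f m) (f m)

lemma card_words (m : ℕ) : Fintype.card (Fin m → Fin 2) = 2^m := by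
  simp [Fintype.card_fun]

/-! ### the doubling step -/

theorem db_step {n : ℕ} {f : ℕ → Fin 2} (hf : IsDB n f) : ∃ g, IsDB (n+1) g := by
  classical
  set N := 2^n with hNdef
  have hN : 0 < N := pow_pos (by norm_num) n
  set s := ps f with hsdef
  set W := ps f N with hWdef
  have hsper : ∀ k, s (k + N) = s k + W := fun k => ps_add_per hf.1 k
  have hs2per : ∀ k, s (k + 2^(n+1)) = s k := by
    intro k
    have e : k + 2^(n+1) = (k + N) + N := by
      have : 2^(n+1) = 2*N := by rw [hNdef, pow_succ]; ring
      omega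
    rw [e, hsper, hsper, add_assoc, fin2_add_self, add_zero]
  -- f-window equality from s-window equality
  have deriv : ∀ (a b : ℕ), (∀ j, j ≤ n → s (a + j) = s (b + j)) →
      ∀ j < n, f (a + j) = f (b + j) := by
    intro a b hab j hj
    rw [ps_letter f (a+j), ps_letter f (b+j)]
    have e1 : a + j + 1 = a + (j+1) := by omega
    have e2 : b + j + 1 = b + (j+1) := by omega
    rw [e1, e2]
    simp only [← hsdef]
    rw [hab (j+1) (by omega), hab j (by omega)]
  have deriv1 : ∀ (a b : ℕ), (∀ j, j ≤ n → s (a + j) = s (b + j) + 1) →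
      ∀ j < n, f (a + j) = f (b + j) := by
    intro a b hab j hj
    rw [ps_letter f (a+j), ps_letter f (b+j)]
    have e1 : a + j + 1 = a + (j+1) := by omega
    have e2 : b + j + 1 = b + (j+1) := by omega
    rw [e1, e2]
    simp only [← hsdef]
    rw [hab (j+1) (by omega), hab j (by omega)]
    have : ∀ x y : Fin 2, (x + 1) + (y + 1) = x + y := by decide
    exact this _ _
  rcases fin2_cases W with hW | hW
  · -- even weight case
    have hsperN : ∀ k, s (k + N) = s k := by
      intro k; rw [hsper, hW, add_zero]
    have s_congr : ∀ {a b : ℕ}, a % N = b % N → s a = s b :=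
      fun h => per_congr hN hsperN h
    -- Lemma A : (position, shift) ↦ window of s+ε is bijective
    have bijPhi : Function.Bijective
        (fun z : Fin N × Fin 2 => (fun j : Fin (n+1) => s ((z.1:ℕ) + j) + z.2)) := by
      rw [Fintype.bijective_iff_injective_and_card]
      constructor
      · rintro ⟨k, ε⟩ ⟨k', ε'⟩ h
        have hptw : ∀ j, j ≤ n → s ((k:ℕ) + j) + ε = s ((k':ℕ) + j) + ε' := by
          intro j hj
          simpa using congrFun h ⟨j, by omega⟩
        have hfw : ∀ j < n, f ((k:ℕ) + j) = f ((k':ℕ) + j) := by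
          intro j hj
          rw [ps_letter f ((k:ℕ)+j), ps_letter f ((k':ℕ)+j)]
          have e1 : (k:ℕ) + j + 1 = (k:ℕ) + (j+1) := by omega
          have e2 : (k':ℕ) + j + 1 = (k':ℕ) + (j+1) := by omega
          rw [e1, e2]
          simp only [← hsdef]
          have pair : ∀ x y e : Fin 2, x + y = (x+e)+(y+e) := by decide
          rw [pair _ _ ε, hptw (j+1) (by omega), hptw j (by omega)]
          exact (pair _ _ ε').symm
        have hmod : (k:ℕ) % N = (k':ℕ) % N := db_inj hf hfw
        rw [Nat.mod_eq_of_lt k.isLt, Nat.mod_eq_of_lt k'.isLt] at hmod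
        have hk : k = k' := Fin.ext hmod
        subst hk
        have hε : ε = ε' := fin2_cancel (hptw 0 (by omega))
        rw [hε]
      · rw [card_words]
        simp [hNdef, pow_succ]
    -- Lemma B : s and s+1 share a window of length n
    have hB : ∃ p q : ℕ, ∀ j < n, s (p + j) = s (q + j) + 1 := by
      by_contra hcon
      push_neg at hcon
      have twist : ∀ (k : ℕ) (b : Fin 2), ∃ k', ∀ j < n,
          s (k' + j) = if j + 1 < n then s (k + (j+1)) else b := by
        intro k b
        obtain ⟨⟨m, ε⟩, hm⟩ := bijPhi.2
          (fun j : Fin (n+1) => if (j:ℕ) < n then s (k + j) else b)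
        have hm' : ∀ j, j ≤ n → s ((m:ℕ) + j) + ε = if j < n then s (k + j) else b := by
          intro j hj
          simpa using congrFun hm ⟨j, by omega⟩
        rcases fin2_cases ε with hε | hε
        · refine ⟨(m:ℕ) + 1, fun j hj => ?_⟩
          have h1 := hm' (j+1) (by omega)
          rw [hε, add_zero] at h1
          rw [show (m:ℕ) + 1 + j = (m:ℕ) + (j+1) by omega, h1]
        · exfalso
          obtain ⟨j, hj, hne⟩ := hcon k (m:ℕ)
          have h1 := hm' j (by omega)
          rw [hε, if_pos hj] at h1
          exact hne h1.symm
      have T : ∀ m, m ≤ n → ∀ w : ℕ → Fin 2, (∀ j, j + m < n → w j = s (j + m)) →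
          ∃ k, ∀ j < n, s (k + j) = w j := by
        intro m
        induction m with
        | zero =>
          intro _ w hw
          refine ⟨0, fun j hj => ?_⟩
          rw [hw j (by omega)]
          congr 1
          omega
        | succ m ih =>
          intro hm w hw
          obtain ⟨k, hk⟩ := ih (by omega) (fun j => if j = 0 then s m else w (j-1)) (by
            intro j hj
            show (if j = 0 then s m else w (j-1)) = s (j + m)
            by_cases h0 : j = 0
            · subst h0; simp
            · rw [if_neg h0, hw (j-1) (by omega)]
              congr 1
              omega)
          obtain ⟨k', hk'⟩ := twist k (w (n-1))
          refine ⟨k', fun j hj => ?_⟩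
          rw [hk' j hj]
          by_cases hcase : j + 1 < n
          · rw [if_pos hcase, hk (j+1) hcase, if_neg (by omega)]
            congr 1
          · rw [if_neg hcase]
            congr 1
            omega
      obtain ⟨k, hk⟩ := T n le_rfl (fun j => s j + 1) (fun j hj => absurd hj (by omega))
      obtain ⟨j, hj, hne⟩ := hcon k 0
      rw [zero_add] at hne
      exact hne (hk j hj)
    -- Lemma C : the cross-join
    obtain ⟨p, q, hpq⟩ := hB
    set M := 2^(n+1) with hMdef
    have hM2 : M = 2*N := by rw [hMdef, hNdef, pow_succ]; ring
    have hnN : n < N := by rw [hNdef]; exact Nat.lt_two_pow_self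
    set g : ℕ → Fin 2 :=
      fun k => if k % M < N then s (p + k % M) else s (q + (k % M - N)) + 1 with hgdef
    have hgper : ∀ k, g (k + M) = g k := by
      intro k
      simp only [hgdef, Nat.add_mod_right]
    have hwin : ∀ k, k < M → ∀ j, j ≤ n →
        g (k + j) = if k < N then s ((p + k) + j) else s ((q + (k - N)) + j) + 1 := by
      intro k hk j hj
      by_cases h1 : k < N
      · rw [if_pos h1]
        by_cases h2 : k + j < N
        · have e : (k + j) % M = k + j := Nat.mod_eq_of_lt (by omega)
          simp only [hgdef]
          rw [e, if_pos h2]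
          congr 1
          omega
        · have e : (k + j) % M = k + j := Nat.mod_eq_of_lt (by omega)
          simp only [hgdef]
          rw [e, if_neg h2]
          have hm : k + j - N < n := by omega
          have e2 : (p + k) + j = (p + (k + j - N)) + N := by omega
          rw [e2, hsperN, hpq _ hm]
      · rw [if_neg h1]
        by_cases h2 : k + j < M
        · have e : (k + j) % M = k + j := Nat.mod_eq_of_lt h2
          simp only [hgdef]
          rw [e, if_neg (by omega)]
          congr 2
          omega
        · have e : (k + j) % M = k + j - M := by
            rw [Nat.mod_eq_sub_mod (by omega)]
            exact Nat.mod_eq_of_lt (by omega)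
          simp only [hgdef]
          rw [e, if_pos (by omega)]
          have hm : k + j - M < n := by omega
          have e2 : (q + (k - N)) + j = (q + (k + j - M)) + N := by omega
          rw [e2, hsperN, hpq _ hm]
    refine ⟨g, ?_, ?_⟩
    · intro k
      exact hgper k
    · rw [Fintype.bijective_iff_injective_and_card]
      constructor
      · intro k k' hkk'
        have hkM : (k:ℕ) < M := k.isLt
        have hkM' : (k':ℕ) < M := k'.isLt
        have hptw : ∀ j, j ≤ n → g ((k:ℕ) + j) = g ((k':ℕ) + j) := by
          intro j hj
          simpa [wnd] using congrFun hkk' ⟨j, by omega⟩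
        by_cases c1 : (k:ℕ) < N <;> by_cases c2 : (k':ℕ) < N
        · -- both in first half
          have hw : ∀ j, j ≤ n → s ((p + (k:ℕ)) + j) = s ((p + (k':ℕ)) + j) := by
            intro j hj
            have h1 := hptw j hj
            rw [hwin _ hkM _ hj, hwin _ hkM' _ hj, if_pos c1, if_pos c2] at h1
            exact h1
          have hmod := db_inj hf (deriv _ _ hw)
          have : (k:ℕ) % N = (k':ℕ) % N :=
            (Nat.ModEq.add_left_cancel' p hmod)
          rw [Nat.mod_eq_of_lt c1, Nat.mod_eq_of_lt c2] at this
          exact Fin.ext this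
        · -- mixed : contradiction
          exfalso
          have hw : ∀ j, j ≤ n → s ((p + (k:ℕ)) + j) = s ((q + ((k':ℕ) - N)) + j) + 1 := by
            intro j hj
            have h1 := hptw j hj
            rw [hwin _ hkM _ hj, hwin _ hkM' _ hj, if_pos c1, if_neg c2] at h1
            exact h1
          have hmod := db_inj hf (deriv1 _ _ hw)
          have h0 := hw 0 (by omega)
          have heq : s ((p + (k:ℕ)) + 0) = s ((q + ((k':ℕ) - N)) + 0) :=
            s_congr (by simpa [hNdef] using hmod)
          rw [heq] at h0
          exact fin2_ne_add_one _ h0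
        · -- mixed other way : contradiction
          exfalso
          have hw : ∀ j, j ≤ n → s ((p + (k':ℕ)) + j) = s ((q + ((k:ℕ) - N)) + j) + 1 := by
            intro j hj
            have h1 := (hptw j hj).symm
            rw [hwin _ hkM _ hj, hwin _ hkM' _ hj, if_neg c1, if_pos c2] at h1
            exact h1
          have hmod := db_inj hf (deriv1 _ _ hw)
          have h0 := hw 0 (by omega)
          have heq : s ((p + (k':ℕ)) + 0) = s ((q + ((k:ℕ) - N)) + 0) :=
            s_congr (by simpa [hNdef] using hmod)
          rw [heq] at h0
          exact fin2_ne_add_one _ h0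
        · -- both in second half
          have hw : ∀ j, j ≤ n → s ((q + ((k:ℕ) - N)) + j) = s ((q + ((k':ℕ) - N)) + j) := by
            intro j hj
            have h1 := hptw j hj
            rw [hwin _ hkM _ hj, hwin _ hkM' _ hj, if_neg c1, if_neg c2] at h1
            exact add_right_cancel h1
          have hmod := db_inj hf (deriv _ _ hw)
          have : ((k:ℕ) - N) % N = ((k':ℕ) - N) % N :=
            (Nat.ModEq.add_left_cancel' q hmod)
          have e1 : (k:ℕ) - N < N := by omega
          have e2 : (k':ℕ) - N < N := by omega
          rw [Nat.mod_eq_of_lt e1, Nat.mod_eq_of_lt e2] at this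
          exact Fin.ext (by omega)
      · rw [card_words]
        simp
  · -- odd weight: s itself is de Bruijn of order n+1
    refine ⟨s, hs2per, ?_⟩
    rw [Fintype.bijective_iff_injective_and_card]
    constructor
    · intro k k' hkk'
      have hptw : ∀ j, j ≤ n → s ((k:ℕ) + j) = s ((k':ℕ) + j) := by
        intro j hj
        have := congrFun hkk' ⟨j, by omega⟩
        simpa [wnd] using this
      have hmod : (k:ℕ) % N = (k':ℕ) % N :=
        db_inj hf (deriv _ _ hptw)
      have hpow : 2^(n+1) = 2*N := by rw [hNdef, pow_succ]; ring
      have hk2 : (k:ℕ) < 2*N := by have := k.isLt; omega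
      have hk2' : (k':ℕ) < 2*N := by have := k'.isLt; omega
      have h0 : s (k:ℕ) = s (k':ℕ) := by simpa [wnd] using hptw 0 (by omega)
      rcases mod_eq_cases hN hk2 hk2' hmod with h | h | h
      · exact Fin.ext h
      · exfalso
        rw [h, hsper, hW] at h0
        exact fin2_ne_add_one (s (k':ℕ)) h0.symm
      · exfalso
        rw [h, hsper, hW] at h0
        exact fin2_ne_add_one (s (k:ℕ)) h0
    · rw [card_words]; simp

theorem exists_db (n : ℕ) : ∃ f, IsDB n f := by
  induction n with
  | zero =>
    refine ⟨fun _ => 0, fun k => rfl, ?_⟩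
    rw [Fintype.bijective_iff_injective_and_card]
    refine ⟨fun a b _ => ?_, by rw [card_words]; simp⟩
    have ha := a.isLt
    have hb := b.isLt
    norm_num at ha hb
    exact Fin.ext (by omega)
  | succ n ih =>
    obtain ⟨f, hf⟩ := ih
    exact db_step hf

end UpwordAux

/- **Statement 10.** For `A = {0,1}` and any `n ≥ 2`, there exists a linear upword for `A^n`
with exactly one `◊`, located at the first position, which begins with `◊ 0^{n-1} 1`. -/
open UpwordAux in
theorem upword_diamond_at_pos_1 (n : ℕ) (hn : 2 ≤ n) :
    ∃ u : List (PSym 2), IsLinearUpword 2 n u ∧ u.count (none : PSym 2) = 1 ∧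
      (none :: (List.replicate (n - 1) (some (0 : Fin 2)) ++ [some (1 : Fin 2)])) <+: u := by
  classical
  obtain ⟨f, hf⟩ := exists_db n
  set N := 2^n with hNdef
  have hN4 : 4 ≤ N := by
    calc (4:ℕ) = 2^2 := by norm_num
    _ ≤ 2^n := Nat.pow_le_pow_right (by norm_num) hn
  have hnN : n < N := by rw [hNdef]; exact Nat.lt_two_pow_self
  obtain ⟨k₀, hk0lt, hk0⟩ := db_surj hf (fun _ => 0)
  have F1 : ∀ j < n, f (k₀ + j) = 0 := fun j hj => congrFun hk0 ⟨j, hj⟩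
  have cancel_k0 : ∀ {a b : ℕ}, (k₀ + a) % N = (k₀ + b) % N → a % N = b % N :=
    fun h => Nat.ModEq.add_left_cancel' k₀ h
  have F3 : f (k₀ + n) = 1 := by
    rcases fin2_cases (f (k₀ + n)) with h | h
    · exfalso
      have hw : ∀ j < n, f ((k₀ + 1) + j) = f (k₀ + j) := by
        intro j hj
        rcases Nat.lt_or_ge (j+1) n with hj1 | hj1
        · rw [show (k₀+1)+j = k₀ + (j+1) by omega, F1 _ hj1, F1 _ hj]
        · rw [show (k₀+1)+j = k₀ + n by omega, h, F1 _ hj]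
      have hmod := cancel_k0 (a := 1) (b := 0)
        (by simpa using db_inj hf hw)
      rw [Nat.mod_eq_of_lt (show (1:ℕ) < N by omega)] at hmod
      simp at hmod
    · exact h
  have F4 : f (k₀ + (N - 1)) = 1 := by
    rcases fin2_cases (f (k₀ + (N - 1))) with h | h
    · exfalso
      have hw : ∀ j < n, f ((k₀ + (N-1)) + j) = f (k₀ + j) := by
        intro j hj
        by_cases hj0 : j = 0
        · subst hj0
          rw [show (k₀+(N-1))+0 = k₀+(N-1) by omega, h, F1 0 (by omega)]
        · rw [show (k₀+(N-1))+j = (k₀ + (j-1)) + N by omega, hf.1,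
            F1 _ (by omega), F1 _ hj]
      have hmod := cancel_k0 (a := N-1) (b := 0)
        (by simpa using db_inj hf hw)
      rw [Nat.mod_eq_of_lt (show N - 1 < N by omega)] at hmod
      simp at hmod
      omega
    · exact h
  have F5 : ∀ j, 1 ≤ j → j < n → f ((k₀ + (N-1)) + j) = 0 := by
    intro j h1 hj
    rw [show (k₀+(N-1))+j = (k₀ + (j-1)) + N by omega, hf.1, F1 _ (by omega)]
  set L := N + n - 3 with hLdef
  set g : ℕ → PSym 2 := fun t => if t = 0 then none else some (f (k₀ + t)) with hgdef
  set u : List (PSym 2) := (List.range (L+1)).map g with hu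
  have hulen : u.length = L + 1 := by simp [hu]
  have ugetE : ∀ t, t ≤ L → u[t]? = some (g t) := by
    intro t ht
    rw [hu, List.getElem?_map, List.getElem?_range (by omega)]
    rfl
  -- characterization of matches at position 0
  have match0 : ∀ v : List (Fin 2), v.length = n →
      (MatchAt u v 0 ↔ ∀ j, 1 ≤ j → j < n → v.getD j 0 = 0) := by
    intro v hv
    constructor
    · rintro ⟨-, hm⟩ j h1 hj
      rcases hm j (by omega) with hc | hc
      · rw [zero_add, ugetE j (by omega)] at hc
        simp only [hgdef] at hc
        rw [if_neg (by omega)] at hc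
        simp at hc
      · rw [zero_add, ugetE j (by omega),
          List.getElem?_eq_getElem (by omega : j < v.length)] at hc
        simp only [hgdef] at hc
        rw [if_neg (by omega)] at hc
        simp only [Option.map_some] at hc
        injection hc with hc'
        injection hc' with hc''
        rw [List.getD_eq_getElem v 0 (by omega : j < v.length), ← hc'', F1 j hj]
    · intro hz
      refine ⟨by omega, fun j hj => ?_⟩
      rw [zero_add]
      by_cases hj0 : j = 0
      · left
        subst hj0
        rw [ugetE 0 (by omega)]
        simp [hgdef]
      · right
        rw [ugetE j (by omega), List.getElem?_eq_getElem (by omega : j < v.length)]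
        simp only [hgdef, Option.map_some]
        rw [if_neg hj0]
        have : v[j] = v.getD j 0 := (List.getD_eq_getElem v 0 (by omega)).symm
        rw [this, hz j (by omega) (by omega), F1 j (by omega)]
  -- characterization of matches at positive positions
  have matchP : ∀ v : List (Fin 2), v.length = n → ∀ i, 1 ≤ i →
      (MatchAt u v i ↔ (i ≤ N - 2 ∧ ∀ j < n, f ((k₀ + i) + j) = v.getD j 0)) := by
    intro v hv i h1
    constructor
    · rintro ⟨hlen, hm⟩
      rw [hv, hulen] at hlen
      refine ⟨by omega, fun j hj => ?_⟩
      rcases hm j (by omega) with hc | hc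
      · rw [ugetE (i+j) (by omega)] at hc
        simp only [hgdef] at hc
        rw [if_neg (by omega)] at hc
        simp at hc
      · rw [ugetE (i+j) (by omega),
          List.getElem?_eq_getElem (by omega : j < v.length)] at hc
        simp only [hgdef, Option.map_some] at hc
        rw [if_neg (by omega)] at hc
        injection hc with hc'
        injection hc' with hc''
        rw [show (k₀ + i) + j = k₀ + (i + j) by omega, hc'',
          List.getD_eq_getElem v 0 (by omega)]
    · rintro ⟨hiN, hw⟩
      refine ⟨by rw [hv, hulen]; omega, fun j hj => ?_⟩
      right
      rw [ugetE (i+j) (by omega), List.getElem?_eq_getElem (by omega : j < v.length)]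
      simp only [hgdef, Option.map_some]
      rw [if_neg (by omega), show k₀ + (i + j) = (k₀ + i) + j by omega,
        hw j (by omega), List.getD_eq_getElem v 0 (by omega)]
  refine ⟨u, ?_, ?_, ?_⟩
  · -- upword property
    intro v hv
    obtain ⟨m, hmlt, hm⟩ := db_surj hf (fun j : Fin n => v.getD j 0)
    have hm' : ∀ j < n, f (m + j) = v.getD j 0 := fun j hj => congrFun hm ⟨j, hj⟩
    by_cases hz : ∀ j, 1 ≤ j → j < n → v.getD j 0 = 0
    · -- v is c·0^(n-1) : the unique match is at 0
      refine ⟨0, (match0 v hv).mpr hz, fun i hi => ?_⟩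
      by_contra hi0
      have h1 : 1 ≤ i := by omega
      obtain ⟨hiN, hw⟩ := (matchP v hv i h1).mp hi
      rcases fin2_cases (v.getD 0 0) with h0 | h0
      · -- v = 0^n
        have hweq : ∀ j < n, f ((k₀ + i) + j) = f (k₀ + j) := by
          intro j hj
          rw [hw j hj, F1 j hj]
          by_cases hj0 : j = 0
          · subst hj0; exact h0
          · exact hz j (by omega) hj
        have hmod := cancel_k0 (a := i) (b := 0) (by simpa using db_inj hf hweq)
        rw [Nat.mod_eq_of_lt (show i < N by omega)] at hmod
        simp at hmod
        omega
      · -- v = 1·0^(n-1)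
        have hweq : ∀ j < n, f ((k₀ + i) + j) = f ((k₀ + (N-1)) + j) := by
          intro j hj
          rw [hw j hj]
          by_cases hj0 : j = 0
          · subst hj0
            rw [show k₀ + (N-1) + 0 = k₀ + (N-1) by omega, F4, h0]
          · rw [F5 j (by omega) hj]
            exact hz j (by omega) hj
        have hmod := cancel_k0 (a := i) (b := N-1) (db_inj hf hweq)
        rw [Nat.mod_eq_of_lt (show i < N by omega),
          Nat.mod_eq_of_lt (show N-1 < N by omega)] at hmod
        omega
    · -- v has a 1 among positions 1..n-1 : the unique match is in the interior
      push_neg at hz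
      obtain ⟨j₀, hj₀1, hj₀n, hj₀⟩ := hz
      set d := (m + N - k₀) % N with hd
      have hdlt : d < N := Nat.mod_lt _ (by omega)
      have hdk : (k₀ + d) % N = m := by
        rw [hd, Nat.add_mod_mod, show k₀ + (m + N - k₀) = m + N by omega,
          Nat.add_mod_right, Nat.mod_eq_of_lt hmlt]
      have hwind : ∀ j < n, f ((k₀ + d) + j) = v.getD j 0 := by
        intro j hj
        rw [← hm' j hj]
        exact per_congr (show 0 < N by omega) hf.1
          (by rw [← Nat.mod_add_mod, hdk])
      have hd0 : d ≠ 0 := by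
        intro h0
        apply hj₀
        rw [← hwind j₀ hj₀n, h0, add_zero, F1 j₀ hj₀n]
      have hdN1 : d ≠ N - 1 := by
        intro h0
        apply hj₀
        rw [← hwind j₀ hj₀n, h0, F5 j₀ (by omega) hj₀n]
      refine ⟨d, (matchP v hv d (by omega)).mpr ⟨by omega, hwind⟩, fun i hi => ?_⟩
      by_cases hi0 : i = 0
      · exfalso
        subst hi0
        exact hj₀ ((match0 v hv).mp hi j₀ (by omega) hj₀n)
      · obtain ⟨hiN, hw⟩ := (matchP v hv i (by omega)).mp hi
        have hweq : ∀ j < n, f ((k₀ + i) + j) = f ((k₀ + d) + j) := by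
          intro j hj
          rw [hw j hj, hwind j hj]
        have hmod := cancel_k0 (db_inj hf hweq)
        rw [Nat.mod_eq_of_lt (show i < N by omega),
          Nat.mod_eq_of_lt (show d < N by omega)] at hmod
        exact hmod
  · -- exactly one diamond
    rw [hu, List.range_succ_eq_map, List.map_cons]
    have hg0 : g 0 = none := by simp [hgdef]
    have hz : List.count (none : PSym 2)
        (List.map g (List.map Nat.succ (List.range L))) = 0 := by
      rw [List.count_eq_zero]
      intro hmem
      obtain ⟨x, hx, hgx⟩ := List.mem_map.mp hmem
      obtain ⟨t, -, rfl⟩ := List.mem_map.mp hx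
      simp only [hgdef] at hgx
      rw [if_neg (Nat.succ_ne_zero t)] at hgx
      exact Option.some_ne_none _ hgx
    rw [hg0, List.count_cons_self, hz]
  · -- the prefix
    have htake : u.take (n+1) = List.map g (List.range (n+1)) := by
      rw [hu, ← List.map_take, List.take_range]
      congr 1
      congr 1
      omega
    have hP : (none :: (List.replicate (n - 1) (some (0 : Fin 2)) ++ [some (1 : Fin 2)]))
        = List.map g (List.range (n+1)) := by
      apply List.ext_getElem
      · simp
        omega
      · intro i h1 h2
        simp only [List.getElem_map, List.getElem_range]
        match i with
        | 0 => simp [hgdef]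
        | Nat.succ i' =>
          rw [List.getElem_cons_succ]
          have hi'n : i' < n := by
            simp at h1
            omega
          by_cases hi : i' < n - 1
          · rw [List.getElem_append_left (by simpa using hi)]
            rw [List.getElem_replicate]
            simp only [hgdef]
            rw [if_neg (Nat.succ_ne_zero i'), show k₀ + i'.succ = k₀ + (i'+1) from rfl,
              F1 (i'+1) (by omega)]
          · rw [List.getElem_append_right (by simpa using hi)]
            simp only [List.length_replicate]
            rw [List.getElem_singleton]
            simp only [hgdef]
            rw [if_neg (Nat.succ_ne_zero i'), show k₀ + i'.succ = k₀ + n by omega, F3]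
    rw [show (none :: (List.replicate (n - 1) (some (0 : Fin 2)) ++ [some (1 : Fin 2)]))
        = u.take (n+1) by rw [hP, ← htake]]
    exact List.take_prefix _ _
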